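/- Let k ≥ 2 be an integer, t'_k(0) = 2, t'_k(h+1) = t'_k(h)^k + 1, and γ(k) = log 2 + Σ_{i=0}^∞ log(1 + 1/t'_k(i)^k)/k^(i+1). Then for every h ≥ 0, t'_k(h) = ⌊ e^(γ(k)·k^h) ⌋; equivalently, the number of ordered rooted subtrees of the perfect k-ary tree of height h equals ⌊ c(k)^(k^h) ⌋ − 1 with c(k) = e^(γ(k)). -/

import Mathlib

theorem stmt7 (k : ℕ) (hk : 2 ≤ k) (t' : ℕ → ℕ)
    (h0 : t' 0 = 2) (hrec : ∀ h, t' (h + 1) = t' h ^ k + 1)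
    (γ : ℝ)
    (hγ : γ = Real.log 2 +
      ∑' i : ℕ, Real.log (1 + 1 / (t' i : ℝ) ^ k) / (k : ℝ) ^ (i + 1)) :
    ∀ h : ℕ, t' h = ⌊Real.exp γ ^ (k ^ h)⌋₊ := by
  have hk0 : k ≠ 0 := by omega
  have hkR : (2:ℝ) ≤ (k:ℝ) := by exact_mod_cast hk
  have hkpos : (0:ℝ) < (k:ℝ) := by linarith
  set a : ℕ → ℝ := fun i => Real.log (1 + 1 / (t' i : ℝ) ^ k) / (k : ℝ) ^ (i + 1) with ha_def
  have ht2 : ∀ i, 2 ≤ t' i := by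
    intro i
    induction i with
    | zero => omega
    | succ n ih =>
      have h1 : t' n ≤ t' n ^ k := Nat.le_self_pow hk0 _
      rw [hrec]; omega
  have htR : ∀ i, (2:ℝ) ≤ (t' i : ℝ) := fun i => by exact_mod_cast ht2 i
  have htpos : ∀ i, (0:ℝ) < (t' i : ℝ) := fun i => by linarith [htR i]
  have hmono : ∀ h i, t' h ≤ t' (i + h) := by
    intro h i
    induction i with
    | zero => simp
    | succ n ih =>
      have h1 : t' (n + h) ≤ t' (n + h) ^ k := Nat.le_self_pow hk0 _
      have : t' (n + 1 + h) = t' (n + h) ^ k + 1 := by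
        rw [show n + 1 + h = (n + h) + 1 by ring, hrec]
      omega
  have hx_pos : ∀ i, (0:ℝ) < 1 + 1 / (t' i : ℝ) ^ k := by
    intro i
    have h1 : (0:ℝ) < (t' i : ℝ) ^ k := pow_pos (htpos i) k
    have h2 : (0:ℝ) < 1 / (t' i : ℝ) ^ k := one_div_pos.mpr h1
    linarith
  have ha_nonneg : ∀ i, 0 ≤ a i := by
    intro i
    apply div_nonneg
    · apply Real.log_nonneg
      have : (0:ℝ) < 1 / (t' i : ℝ) ^ k := one_div_pos.mpr (pow_pos (htpos i) k)
      linarith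
    · positivity
  have ha_le : ∀ i, a i ≤ 1 / (t' i : ℝ) ^ k * (1 / k) ^ (i + 1) := by
    intro i
    have h1 : Real.log (1 + 1 / (t' i : ℝ) ^ k) ≤ 1 / (t' i : ℝ) ^ k := by
      have := Real.log_le_sub_one_of_pos (hx_pos i)
      linarith
    rw [ha_def]
    simp only
    rw [div_le_iff₀ (by positivity)]
    calc Real.log (1 + 1 / (t' i : ℝ) ^ k) ≤ 1 / (t' i : ℝ) ^ k := h1
      _ = 1 / (t' i : ℝ) ^ k * ((1 / k) ^ (i + 1) * (k:ℝ) ^ (i + 1)) := by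
          rw [one_div (k:ℝ), inv_pow, inv_mul_cancel₀ (by positivity), mul_one]
      _ = 1 / (t' i : ℝ) ^ k * (1 / k) ^ (i + 1) * (k:ℝ) ^ (i + 1) := by ring
  have hgeo : Summable (fun i : ℕ => ((1:ℝ)/2) ^ (i + 1)) := by
    apply Summable.comp_injective (summable_geometric_of_lt_one (by norm_num) (by norm_num : (1:ℝ)/2 < 1)) (add_left_injective 1)
  have hsummable : Summable a := by
    apply Summable.of_nonneg_of_le ha_nonneg _ hgeo
    intro i
    calc a i ≤ 1 / (t' i : ℝ) ^ k * (1 / k) ^ (i + 1) := ha_le i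
      _ ≤ 1 * (1/2) ^ (i + 1) := by
          apply mul_le_mul
          · rw [div_le_one (pow_pos (htpos i) k)]
            calc (1:ℝ) ≤ 2 ^ k := one_le_pow₀ (by norm_num)
              _ ≤ (t' i : ℝ) ^ k := pow_le_pow_left₀ (by norm_num) (htR i) k
          · apply pow_le_pow_left₀ (by positivity)
            rw [div_le_div_iff₀ hkpos (by norm_num)]
            linarith
          · positivity
          · norm_num
      _ = (1/2) ^ (i + 1) := one_mul _
  -- key identity
  have hsum_shift : ∀ h : ℕ, Summable (fun i => (k:ℝ) ^ h * a (i + h)) := by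
    intro h
    exact (((summable_nat_add_iff h).mpr hsummable)).mul_left _
  have key : ∀ h : ℕ, γ * (k:ℝ) ^ h = Real.log (t' h) + ∑' i : ℕ, (k:ℝ) ^ h * a (i + h) := by
    intro h
    induction h with
    | zero => simp [hγ, h0, ha_def]
    | succ n ih =>
      have hshift := (summable_nat_add_iff (f := fun i => (k:ℝ)^n * a (i + n)) 1).mpr (hsum_shift n)
      have e1 : ∑' i : ℕ, (k:ℝ) ^ n * a (i + n)
          = (k:ℝ)^n * a n + ∑' i : ℕ, (k:ℝ) ^ n * a (i + 1 + n) := by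
        rw [Summable.tsum_eq_zero_add (hsum_shift n)]
        norm_num
      have e2 : Real.log (t' (n+1)) = k * Real.log (t' n) + Real.log (1 + 1 / (t' n : ℝ) ^ k) := by
        have hne : ((t' n : ℝ)) ≠ 0 := ne_of_gt (htpos n)
        have hcast : ((t' (n+1) : ℕ) : ℝ) = (t' n : ℝ) ^ k * (1 + 1 / (t' n : ℝ) ^ k) := by
          rw [hrec]
          push_cast
          field_simp
        rw [hcast, Real.log_mul (by positivity) (by linarith [hx_pos n]), Real.log_pow]
      have e3 : (k:ℝ)^n * a n * k = Real.log (1 + 1 / (t' n : ℝ) ^ k) := by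
        rw [ha_def]
        simp only
        rw [pow_succ]
        field_simp
      have e4 : ∑' i : ℕ, (k:ℝ) ^ (n+1) * a (i + (n+1))
          = k * ∑' i : ℕ, (k:ℝ) ^ n * a (i + 1 + n) := by
        rw [← tsum_mul_left]
        congr 1
        ext i
        rw [pow_succ]
        ring_nf
      calc γ * (k:ℝ) ^ (n+1) = (γ * (k:ℝ)^n) * k := by ring
        _ = (Real.log (t' n) + ((k:ℝ)^n * a n + ∑' i : ℕ, (k:ℝ) ^ n * a (i + 1 + n))) * k := by
            rw [ih, e1]
        _ = (k * Real.log (t' n) + (k:ℝ)^n * a n * k) + k * ∑' i : ℕ, (k:ℝ) ^ n * a (i + 1 + n) := by ring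
        _ = Real.log (t' (n+1)) + ∑' i : ℕ, (k:ℝ) ^ (n+1) * a (i + (n+1)) := by
            rw [e2, e3, e4]
  -- now the main conclusion
  intro h
  set ε : ℝ := ∑' i : ℕ, (k:ℝ) ^ h * a (i + h) with hε_def
  have hε_nonneg : 0 ≤ ε := tsum_nonneg (fun i => by
    have := ha_nonneg (i + h); positivity)
  set t : ℝ := (t' h : ℝ) with ht_def
  have ht2R : (2:ℝ) ≤ t := htR h
  -- bound on ε
  have hε_le : ε ≤ 1 / t ^ k := by
    have hb : ∀ i : ℕ, (k:ℝ) ^ h * a (i + h) ≤ 1 / t ^ k * (1/k) ^ (i+1) := by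
      intro i
      have h1 : a (i + h) ≤ 1 / (t' (i+h) : ℝ) ^ k * (1 / k) ^ (i + h + 1) := ha_le (i+h)
      have h2 : (1:ℝ) / (t' (i+h) : ℝ) ^ k ≤ 1 / t ^ k := by
        apply one_div_le_one_div_of_le (by positivity)
        apply pow_le_pow_left₀ (by linarith)
        rw [ht_def]
        exact_mod_cast hmono h i
      calc (k:ℝ) ^ h * a (i + h) ≤ (k:ℝ) ^ h * (1 / (t' (i+h) : ℝ) ^ k * (1 / k) ^ (i + h + 1)) := by
            apply mul_le_mul_of_nonneg_left h1 (by positivity)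
        _ ≤ (k:ℝ) ^ h * (1 / t ^ k * (1 / k) ^ (i + h + 1)) := by
            apply mul_le_mul_of_nonneg_left _ (by positivity)
            apply mul_le_mul_of_nonneg_right h2 (by positivity)
        _ = 1 / t ^ k * (1/k) ^ (i+1) := by
            have hkh : (k:ℝ)^h * ((1:ℝ)/k)^h = 1 := by
              rw [one_div, inv_pow, mul_inv_cancel₀ (by positivity)]
            have hsplit : ((1:ℝ)/k) ^ (i + h + 1) = (1/k)^h * (1/k)^(i+1) := by
              rw [← pow_add]; congr 1; ring
            calc (k:ℝ) ^ h * (1 / t ^ k * (1 / k) ^ (i + h + 1))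
                = ((k:ℝ)^h * ((1:ℝ)/k)^h) * (1 / t ^ k * (1/k)^(i+1)) := by
                  rw [hsplit]; ring
              _ = 1 / t ^ k * (1/k) ^ (i+1) := by rw [hkh, one_mul]
    have hsg : Summable (fun i : ℕ => 1 / t ^ k * ((1:ℝ)/k) ^ (i+1)) := by
      apply Summable.mul_left
      apply Summable.comp_injective _ (add_left_injective 1)
      apply summable_geometric_of_lt_one (by positivity)
      rw [div_lt_one hkpos]; linarith
    have := Summable.tsum_le_tsum hb (hsum_shift h) hsg
    calc ε ≤ ∑' i : ℕ, 1 / t ^ k * ((1:ℝ)/k) ^ (i+1) := this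
      _ = 1 / t ^ k * ∑' i : ℕ, ((1:ℝ)/k) ^ (i+1) := tsum_mul_left
      _ ≤ 1 / t ^ k * 1 := by
          apply mul_le_mul_of_nonneg_left _ (by positivity)
          have h1 : ∑' i : ℕ, ((1:ℝ)/k) ^ (i+1) = (1/k) * ∑' i : ℕ, ((1:ℝ)/k) ^ i := by
            rw [← tsum_mul_left]
            congr 1; ext i; rw [pow_succ]; ring
          have hhalf : (1:ℝ)/k ≤ 1/2 := by
            rw [div_le_div_iff₀ hkpos (by norm_num)]; linarith
          have hpos2 : (0:ℝ) < 1 - 1/k := by linarith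
          rw [h1, tsum_geometric_of_lt_one (by positivity) (by rw [div_lt_one hkpos]; linarith)]
          rw [← div_eq_mul_inv, div_le_one hpos2]
          linarith
      _ = 1 / t ^ k := mul_one _
  have htk2 : t ^ 2 ≤ t ^ k := pow_le_pow_right₀ (by linarith) hk
  have hε_lt : ε < 1 / (t + 1) := by
    have h1 : (1:ℝ) / t ^ k ≤ 1 / t ^ 2 := by
      apply one_div_le_one_div_of_le (by positivity) htk2
    have h2 : (1:ℝ) / t ^ 2 < 1 / (t + 1) := by
      apply one_div_lt_one_div_of_lt (by linarith)
      nlinarith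
    linarith
  have hε_lt1 : ε < 1 := by
    have : (1:ℝ)/(t+1) ≤ 1 := by
      rw [div_le_one (by linarith)]; linarith
    linarith
  -- value of the power
  have hval : Real.exp γ ^ (k ^ h) = t * Real.exp ε := by
    have h1 : Real.exp γ ^ (k ^ h) = Real.exp (((k ^ h : ℕ) : ℝ) * γ) := by
      rw [Real.exp_nat_mul]
    rw [h1]
    have h2 : ((k ^ h : ℕ) : ℝ) * γ = γ * (k:ℝ)^h := by push_cast; ring
    rw [h2, key h, Real.exp_add, Real.exp_log (htpos h)]
  rw [hval]
  symm
  rw [Nat.floor_eq_iff (by positivity)]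
  constructor
  · have : (1:ℝ) ≤ Real.exp ε := by
      rw [Real.one_le_exp_iff]; exact hε_nonneg
    nlinarith [htpos h]
  · have hexp_le : Real.exp ε ≤ 1 / (1 - ε) := by
      have h1 : 1 - ε ≤ Real.exp (-ε) := by
        have := Real.add_one_le_exp (-ε); linarith
      have h2 : (0:ℝ) < 1 - ε := by linarith
      rw [le_div_iff₀ h2]
      calc Real.exp ε * (1 - ε) ≤ Real.exp ε * Real.exp (-ε) := by
            apply mul_le_mul_of_nonneg_left h1 (Real.exp_pos ε).le
        _ = 1 := by rw [← Real.exp_add]; simp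
    have h2 : (0:ℝ) < 1 - ε := by linarith
    have h3 : t * Real.exp ε ≤ t / (1 - ε) := by
      rw [div_eq_mul_inv, ← one_div]
      apply mul_le_mul_of_nonneg_left hexp_le (by linarith)
    have h4 : t / (1 - ε) < t + 1 := by
      rw [div_lt_iff₀ h2]
      have : ε * (t + 1) < 1 := by
        have := (lt_div_iff₀ (by linarith : (0:ℝ) < t + 1)).mp hε_lt
        linarith
      nlinarith

    linarith
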